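/- arXiv:2001.01287 — 2 statements merged into one kernel-verified Lean document; each statement's English description precedes it below -/
import Mathlib

section
/- Let f be meromorphic near z₀ with a pole of order t ≥ 1, let q₀ ≥ 2, q_k ≥ 1, k ≥ 1, and set g = f^{q₀}(f^{(k)})^{q_k} − 1 and β = q₀ f' (f^{(k)})^{q_k} + q_k f (f^{(k)})^{q_k−1} f^{(k+1)} − f (f^{(k)})^{q_k} (g'/g). Then f^{q₀−1} β = −g'/g; in particular, if t ≥ 2 then z₀ is a zero of β of order (q₀−1)t − 1. -/
open MeasureTheory Filter intervalIntegral

/-- log⁺ x = max 0 (log x). -/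
noncomputable def logPlus (x : ℝ) : ℝ := max 0 (Real.log x)

/-- Nevanlinna proximity function m(r, f). -/
noncomputable def nevProx (f : ℂ → ℂ) (r : ℝ) : ℝ :=
  (2 * Real.pi)⁻¹ * ∫ θ in (0 : ℝ)..(2 * Real.pi),
    logPlus ‖f (r * Complex.exp (θ * Complex.I))‖

/-- The order of `f` at `z` as a meromorphic function (junk value `0` if not meromorphic). -/
noncomputable def morder (f : ℂ → ℂ) (z : ℂ) : WithTop ℤ := by
  classical exact if h : MeromorphicAt f z then meromorphicOrderAt f z else 0

/-- Pole multiplicity of `f` at `z`, truncated at level `m` (`m = 0` means no truncation). -/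
noncomputable def poleMult (f : ℂ → ℂ) (m : ℕ) (z : ℂ) : ℕ :=
  if m = 0 then (-(morder f z).untopD 0).toNat
  else min m (-(morder f z).untopD 0).toNat

/-- Unintegrated counting function n(t, f) of poles, truncated at level `m`. -/
noncomputable def nevSmallN (f : ℂ → ℂ) (m : ℕ) (t : ℝ) : ℝ :=
  ∑' z : ℂ, if ‖z‖ ≤ t then (poleMult f m z : ℝ) else 0

/-- Integrated counting function N(r, f) of poles, truncated at level `m`
(`m = 0`: with multiplicity, `m = 1`: reduced). -/
noncomputable def nevCountN (f : ℂ → ℂ) (m : ℕ) (r : ℝ) : ℝ :=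
  (∫ t in (0 : ℝ)..r, (nevSmallN f m t - nevSmallN f m 0) / t) +
    nevSmallN f m 0 * Real.log r

/-- Nevanlinna characteristic function T(r, f). -/
noncomputable def nevT (f : ℂ → ℂ) (r : ℝ) : ℝ := nevProx f r + nevCountN f 0 r

/-- `f` is a transcendental meromorphic function on ℂ. -/
def TranscendentalMeromorphic (f : ℂ → ℂ) : Prop :=
  MeromorphicOn f Set.univ ∧
    ¬ ∃ p q : Polynomial ℂ, q ≠ 0 ∧ ∀ᶠ z in Filter.cofinite, f z = p.eval z / q.eval z

/-- `S` is an `S(r, f)`-type error term: `S(r) = o(T(r, f))` as `r → ∞` outside a set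
`E` of finite linear measure. -/
def IsSrf (S : ℝ → ℝ) (f : ℂ → ℂ) : Prop :=
  ∃ E : Set ℝ, volume E ≠ ⊤ ∧ S =o[atTop ⊓ Filter.principal Eᶜ] nevT f

/-- `a` is a small function with respect to `f`. -/
def SmallFunctionOf (a f : ℂ → ℂ) : Prop :=
  MeromorphicOn a Set.univ ∧ (¬ ∀ᶠ z in Filter.cofinite, a z = 0) ∧ IsSrf (nevT a) f


/-- Local normal form: `f z = (z - x)^n * φ z` near `x` with `φ` analytic, `φ x ≠ 0`. -/
def MOrd (f : ℂ → ℂ) (x : ℂ) (n : ℤ) : Prop :=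
  ∃ φ : ℂ → ℂ, AnalyticAt ℂ φ x ∧ φ x ≠ 0 ∧
    ∀ᶠ z in nhdsWithin x {x}ᶜ, f z = (z - x) ^ n * φ z

lemma MOrd.meromorphicAt {f : ℂ → ℂ} {x : ℂ} {n : ℤ} (h : MOrd f x n) :
    MeromorphicAt f x := by
  obtain ⟨φ, hφ, -, hev⟩ := h
  exact MeromorphicAt.iff_eventuallyEq_zpow_smul_analyticAt.mpr
    ⟨n, φ, hφ, by simpa [smul_eq_mul] using hev⟩

lemma MOrd.order_eq {f : ℂ → ℂ} {x : ℂ} {n : ℤ} (hm : MeromorphicAt f x)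
    (h : MOrd f x n) : meromorphicOrderAt f x = n := by
  obtain ⟨φ, hφ, hφx, hev⟩ := h
  exact (meromorphicOrderAt_eq_int_iff hm).mpr ⟨φ, hφ, hφx, by simpa [smul_eq_mul] using hev⟩

lemma MOrd.of_order {f : ℂ → ℂ} {x : ℂ} {n : ℤ} (hm : MeromorphicAt f x)
    (h : meromorphicOrderAt f x = n) : MOrd f x n := by
  obtain ⟨φ, hφ, hφx, hev⟩ := (meromorphicOrderAt_eq_int_iff hm).mp h
  exact ⟨φ, hφ, hφx, by simpa [smul_eq_mul] using hev⟩

lemma MOrd.congr {f g : ℂ → ℂ} {x : ℂ} {n : ℤ} (h : MOrd f x n)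
    (he : ∀ᶠ z in nhdsWithin x {x}ᶜ, f z = g z) : MOrd g x n := by
  obtain ⟨φ, hφ, hφx, hev⟩ := h
  exact ⟨φ, hφ, hφx, by filter_upwards [hev, he] with z h1 h2; rw [← h2, h1]⟩

lemma MOrd.eventually_ne {f : ℂ → ℂ} {x : ℂ} {n : ℤ} (h : MOrd f x n) :
    ∀ᶠ z in nhdsWithin x {x}ᶜ, f z ≠ 0 := by
  obtain ⟨φ, hφ, hφx, hev⟩ := h
  have hφne : ∀ᶠ z in nhdsWithin x {x}ᶜ, φ z ≠ 0 :=
    nhdsWithin_le_nhds (hφ.continuousAt.eventually_ne hφx)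
  filter_upwards [hev, hφne, self_mem_nhdsWithin] with z h1 h2 h3
  rw [h1]
  exact mul_ne_zero (zpow_ne_zero _ (sub_ne_zero.mpr h3)) h2

lemma MOrd.mul {f g : ℂ → ℂ} {x : ℂ} {m n : ℤ} (hf : MOrd f x m) (hg : MOrd g x n) :
    MOrd (fun z => f z * g z) x (m + n) := by
  obtain ⟨φ, hφ, hφx, hevf⟩ := hf
  obtain ⟨ψ, hψ, hψx, hevg⟩ := hg
  refine ⟨fun z => φ z * ψ z, hφ.mul hψ, mul_ne_zero hφx hψx, ?_⟩
  filter_upwards [hevf, hevg, self_mem_nhdsWithin] with z h1 h2 h3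
  rw [h1, h2, zpow_add₀ (sub_ne_zero.mpr h3)]
  ring

lemma MOrd.inv {f : ℂ → ℂ} {x : ℂ} {m : ℤ} (hf : MOrd f x m) :
    MOrd (fun z => (f z)⁻¹) x (-m) := by
  obtain ⟨φ, hφ, hφx, hev⟩ := hf
  refine ⟨fun z => (φ z)⁻¹, hφ.inv hφx, inv_ne_zero hφx, ?_⟩
  have hφne : ∀ᶠ z in nhdsWithin x {x}ᶜ, φ z ≠ 0 :=
    nhdsWithin_le_nhds (hφ.continuousAt.eventually_ne hφx)
  filter_upwards [hev, hφne, self_mem_nhdsWithin] with z h1 h2 h3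
  rw [h1, mul_inv, zpow_neg]

lemma MOrd.pow {f : ℂ → ℂ} {x : ℂ} {m : ℤ} (hf : MOrd f x m) (q : ℕ) :
    MOrd (fun z => f z ^ q) x (q * m) := by
  induction q with
  | zero => exact ⟨fun _ => 1, analyticAt_const, one_ne_zero, by
      filter_upwards with z; simp⟩
  | succ q ih =>
      have := ih.mul hf
      have h : ((q : ℤ) * m + m) = ((q + 1 : ℕ) : ℤ) * m := by push_cast; ring
      rw [h] at this
      exact this.congr (by filter_upwards with z; rw [pow_succ])

lemma MOrd.neg {f : ℂ → ℂ} {x : ℂ} {m : ℤ} (hf : MOrd f x m) :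
    MOrd (fun z => -f z) x m := by
  obtain ⟨φ, hφ, hφx, hev⟩ := hf
  refine ⟨fun z => -φ z, hφ.neg, neg_ne_zero.mpr hφx, ?_⟩
  filter_upwards [hev] with z h1
  rw [h1]; ring

lemma MOrd.sub_one {f : ℂ → ℂ} {x : ℂ} {m : ℤ} (hf : MOrd f x m) (hm : m < 0) :
    MOrd (fun z => f z - 1) x m := by
  obtain ⟨φ, hφ, hφx, hev⟩ := hf
  set N : ℕ := (-m).toNat with hN
  have hNm : (N : ℤ) = -m := Int.toNat_of_nonneg (by omega)
  have hNpos : 1 ≤ N := by omega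
  refine ⟨fun z => φ z - (z - x) ^ N, ?_, ?_, ?_⟩
  · exact hφ.sub (((analyticAt_id.sub analyticAt_const).pow N))
  · simpa [sub_self, zero_pow (by omega : N ≠ 0)] using hφx
  · filter_upwards [hev, self_mem_nhdsWithin] with z h1 h3
    have hne : z - x ≠ 0 := sub_ne_zero.mpr h3
    rw [h1, mul_sub]
    congr 1
    rw [← zpow_natCast (z - x) N, ← zpow_add₀ hne, hNm]
    simp

lemma MOrd.derivO {f : ℂ → ℂ} {x : ℂ} {m : ℤ} (hf : MOrd f x m) (hm : m ≠ 0) :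
    MOrd (_root_.deriv f) x (m - 1) := by
  obtain ⟨φ, hφ, hφx, hev⟩ := hf
  -- analytic set of φ
  have hAOn : AnalyticOnNhd ℂ φ {z | AnalyticAt ℂ φ z} := fun z hz => hz
  have hφ' : AnalyticAt ℂ (_root_.deriv φ) x := hAOn.deriv x hφ
  obtain ⟨u, hu_open, hu_mem, hu_sub⟩ := mem_nhdsWithin.mp hev
  set w : Set ℂ := u ∩ {z | AnalyticAt ℂ φ z} with hw
  have hw_open : IsOpen w := hu_open.inter (isOpen_analyticAt ℂ φ)
  have hw_mem : x ∈ w := ⟨hu_mem, hφ⟩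
  refine ⟨fun z => (m : ℂ) * φ z + (z - x) * _root_.deriv φ z,
    (analyticAt_const.mul hφ).add ((analyticAt_id.sub analyticAt_const).mul hφ'), ?_, ?_⟩
  · simpa using mul_ne_zero (by exact_mod_cast hm : (m : ℂ) ≠ 0) hφx
  · rw [eventually_nhdsWithin_iff]
    filter_upwards [hw_open.mem_nhds hw_mem] with z hz hzx
    have hzx' : z - x ≠ 0 := sub_ne_zero.mpr hzx
    -- f agrees with F on the open set w \ {x} ∋ z
    have heq : f =ᶠ[nhds z] fun z' => (z' - x) ^ m * φ z' := by
      have : w ∩ {x}ᶜ ∈ nhds z :=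
        (hw_open.inter isOpen_compl_singleton).mem_nhds ⟨hz, hzx⟩
      filter_upwards [this] with z' ⟨hz'w, hz'x⟩
      exact hu_sub ⟨hz'w.1, hz'x⟩
    have hd1 : HasDerivAt (fun z' : ℂ => (z' - x) ^ m) ((m : ℂ) * (z - x) ^ (m - 1)) z := by
      have := (hasDerivAt_zpow m (z - x) (Or.inl hzx')).comp z
        ((hasDerivAt_id z).sub_const x)
      simpa [Function.comp_def] using this
    have hd2 : HasDerivAt φ (_root_.deriv φ z) z := hz.2.differentiableAt.hasDerivAt
    have hdF : deriv f z = (m : ℂ) * (z - x) ^ (m - 1) * φ z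
        + (z - x) ^ m * _root_.deriv φ z := by
      rw [Filter.EventuallyEq.deriv_eq heq]
      exact (hd1.mul hd2).deriv
    rw [hdF, show m = (m - 1) + 1 by ring, zpow_add_one₀ hzx']
    ring_nf

lemma morder_eq' {f : ℂ → ℂ} {z : ℂ} (hf : MeromorphicAt f z) :
    morder f z = meromorphicOrderAt f z := by
  unfold morder
  exact dif_pos hf

theorem stmt15 (f : ℂ → ℂ) (z₀ : ℂ) (hf : MeromorphicAt f z₀)
    (t q₀ qk k : ℕ) (ht : 1 ≤ t) (hq₀ : 2 ≤ q₀) (hqk : 1 ≤ qk) (hk : 1 ≤ k)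
    (hpole : morder f z₀ = (-(t : ℤ) : ℤ))
    (g β : ℂ → ℂ)
    (hg : ∀ z, g z = (f z) ^ q₀ * (iteratedDeriv k f z) ^ qk - 1)
    (hβ : ∀ z, β z =
      (q₀ : ℂ) * deriv f z * (iteratedDeriv k f z) ^ qk +
        (qk : ℂ) * f z * (iteratedDeriv k f z) ^ (qk - 1) * iteratedDeriv (k + 1) f z -
        f z * (iteratedDeriv k f z) ^ qk * (deriv g z / g z)) :
    (∀ᶠ z in nhdsWithin z₀ {z₀}ᶜ,
        (f z) ^ (q₀ - 1) * β z = -(deriv g z / g z)) ∧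
    (2 ≤ t → morder β z₀ = (((q₀ : ℤ) - 1) * (t : ℤ) - 1 : ℤ)) := by
  classical
  obtain ⟨p, rfl⟩ : ∃ p, q₀ = p + 2 := ⟨q₀ - 2, by omega⟩
  obtain ⟨r, rfl⟩ : ∃ r, qk = r + 1 := ⟨qk - 1, by omega⟩
  have hford : meromorphicOrderAt f z₀ = ((-(t : ℤ) : ℤ) : WithTop ℤ) := by
    rw [morder_eq' hf] at hpole; exact hpole
  have hfM : MOrd f z₀ (-(t : ℤ)) := MOrd.of_order hf hford
  have htZ : (1 : ℤ) ≤ (t : ℤ) := by exact_mod_cast ht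
  have hiter : ∀ j : ℕ, MOrd (deriv^[j] f) z₀ (-(t : ℤ) - j) := by
    intro j
    induction j with
    | zero => simpa using hfM
    | succ j ih =>
        have h1 := ih.derivO (by omega)
        rw [Function.iterate_succ_apply']
        have h2 : (-(t : ℤ) - j) - 1 = -(t : ℤ) - (j + 1 : ℕ) := by push_cast; ring
        rwa [h2] at h1
  have hDM : MOrd (iteratedDeriv k f) z₀ (-(t : ℤ) - k) := by
    rw [iteratedDeriv_eq_iterate]; exact hiter k
  set M : ℤ := ((p + 2 : ℕ) : ℤ) * (-(t : ℤ)) + ((r + 1 : ℕ) : ℤ) * (-(t : ℤ) - k) with hM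
  have hMneg : M < 0 := by
    have e : M = -((((p : ℤ) + 2) * t) + ((r : ℤ) + 1) * ((t : ℤ) + k)) := by
      rw [hM]; push_cast; ring
    have hA : (1 : ℤ) ≤ ((p : ℤ) + 2) * t := by nlinarith [Int.ofNat_nonneg p]
    have hB : (0 : ℤ) ≤ ((r : ℤ) + 1) * ((t : ℤ) + k) := by positivity
    omega
  have hPM : MOrd (fun z => f z ^ (p + 2) * iteratedDeriv k f z ^ (r + 1)) z₀ M :=
    (hfM.pow (p + 2)).mul (hDM.pow (r + 1))
  have hgM : MOrd g z₀ M :=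
    (hPM.sub_one hMneg).congr (by filter_upwards with z; rw [hg z])
  have hg'M : MOrd (deriv g) z₀ (M - 1) := hgM.derivO (ne_of_lt hMneg)
  have hquotM : MOrd (fun z => deriv g z / g z) z₀ (-1) := by
    have h1 := hg'M.mul hgM.inv
    have h2 : (M - 1) + -M = -1 := by ring
    rw [h2] at h1
    exact h1.congr (by filter_upwards with z; rw [div_eq_mul_inv])
  have hnegM : MOrd (fun z => -(deriv g z / g z)) z₀ (-1) := hquotM.neg
  -- Part 1
  have E1 : ∀ᶠ z in nhdsWithin z₀ {z₀}ᶜ,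
      (f z) ^ (p + 2 - 1) * β z = -(deriv g z / g z) := by
    filter_upwards [hgM.eventually_ne, hf.eventually_analyticAt] with z hgz hfz
    obtain ⟨u, hu, hfu⟩ := hfz.exists_mem_nhds_analyticOnNhd
    have hfu' : AnalyticOnNhd ℂ f (interior u) := fun w hw => hfu w (interior_subset hw)
    have hDan : AnalyticAt ℂ (deriv^[k] f) z :=
      hfu'.iterated_deriv k z (mem_interior_iff_mem_nhds.mpr hu)
    have hDf : HasDerivAt f (deriv f z) z := hfz.differentiableAt.hasDerivAt
    have hDD : HasDerivAt (iteratedDeriv k f) (iteratedDeriv (k + 1) f z) z := by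
      have h1 : HasDerivAt (deriv^[k] f) (deriv (deriv^[k] f) z) z :=
        hDan.differentiableAt.hasDerivAt
      simpa [iteratedDeriv_succ, iteratedDeriv_eq_iterate] using h1
    have hgfun : g = fun w => f w ^ (p + 2) * iteratedDeriv k f w ^ (r + 1) - 1 := funext hg
    have hgd : HasDerivAt g
        ((((p + 2 : ℕ) : ℂ) * f z ^ (p + 2 - 1) * deriv f z) * iteratedDeriv k f z ^ (r + 1)
          + f z ^ (p + 2) *
            (((r + 1 : ℕ) : ℂ) * iteratedDeriv k f z ^ (r + 1 - 1)
              * iteratedDeriv (k + 1) f z)) z := by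
      rw [hgfun]
      exact ((hDf.pow (p + 2)).mul (hDD.pow (r + 1))).sub_const 1
    have hderiv := hgd.deriv
    have hgz' : f z ^ (p + 2) * iteratedDeriv k f z ^ (r + 1) - 1 ≠ 0 := by
      rw [← hg z]; exact hgz
    rw [hβ z, hderiv, hg z]
    simp only [show p + 2 - 1 = p + 1 from rfl, show r + 1 - 1 = r from rfl]
    push_cast
    generalize hG : f z ^ (p + 2) * iteratedDeriv k f z ^ (r + 1) - 1 = G at hgz' ⊢
    field_simp
    subst hG
    ring
  refine ⟨E1, fun _ => ?_⟩
  -- Part 2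
  have h2 : MOrd (fun z => f z ^ (p + 2 - 1) * β z) z₀ (-1) :=
    hnegM.congr (E1.mono fun z hz => hz.symm)
  have hpowM : MOrd (fun z => f z ^ (p + 2 - 1)) z₀ (((p + 2 - 1 : ℕ) : ℤ) * (-(t : ℤ))) :=
    hfM.pow (p + 2 - 1)
  have hβM : MOrd β z₀ (-(((p + 2 - 1 : ℕ) : ℤ) * (-(t : ℤ))) + -1) := by
    have h3 := hpowM.inv.mul h2
    refine h3.congr ?_
    filter_upwards [hfM.eventually_ne] with z hfz
    rw [← mul_assoc, inv_mul_cancel₀ (pow_ne_zero _ hfz), one_mul]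
  have hβmero : MeromorphicAt β z₀ := hβM.meromorphicAt
  have harith : (-(((p + 2 - 1 : ℕ) : ℤ) * (-(t : ℤ))) + -1)
      = (((p + 2 : ℕ) : ℤ) - 1) * (t : ℤ) - 1 := by
    push_cast [show p + 2 - 1 = p + 1 from rfl]
    ring
  rw [morder_eq' hβmero, hβM.order_eq hβmero, harith]
end

section
/- Let f be meromorphic, q₀ ≥ 2, q_k ≥ 1, k ≥ 1, g = f^{q₀}(f^{(k)})^{q_k} − 1. If z₀ is a zero of f of multiplicity q ≥ k+1, then z₀ is a zero of β = −(g'/g)/f^{q₀−1} of order at least q_k(q − k) + (q − 1). -/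
open MeasureTheory Filter intervalIntegral

open Topology

lemma analyticAt_order_ge {P H : ℂ → ℂ} {x : ℂ} (hP : AnalyticAt ℂ P x) (hH : AnalyticAt ℂ H x)
    (M : ℕ) (heq : ∀ᶠ z in 𝓝 x, P z = (z - x) ^ M * H z) : (M : ℕ∞) ≤ analyticOrderAt P x := by
  rcases eq_or_ne (analyticOrderAt P x) ⊤ with h' | h'
  · rw [h']; exact le_top
  obtain ⟨n, hn⟩ := WithTop.ne_top_iff_exists.mp h'
  obtain ⟨g, hg, hgx, hfg⟩ := hP.analyticOrderAt_eq_natCast.mp hn.symm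
  rw [← hn]
  refine Nat.cast_le.mpr ?_
  by_contra hlt
  push_neg at hlt
  -- n < M; derive g x = 0
  have hev : ∀ᶠ z in 𝓝[≠] x, g z = (z - x) ^ (M - n) * H z := by
    have h1 : ∀ᶠ z in 𝓝[≠] x, P z = (z - x) ^ M * H z := heq.filter_mono nhdsWithin_le_nhds
    have h2 : ∀ᶠ z in 𝓝[≠] x, P z = (z - x) ^ n • g z := hfg.filter_mono nhdsWithin_le_nhds
    filter_upwards [h1, h2, self_mem_nhdsWithin] with z e1 e2 (e3 : z ∈ ({x}ᶜ : Set ℂ))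
    have hz : z - x ≠ 0 := sub_ne_zero.mpr e3
    have : (z - x) ^ n * g z = (z - x) ^ n * ((z - x) ^ (M - n) * H z) := by
      rw [← mul_assoc, ← pow_add, show n + (M - n) = M by omega, ← e1, e2, smul_eq_mul]
    exact mul_left_cancel₀ (pow_ne_zero _ hz) this
  have hten : Filter.Tendsto g (𝓝[≠] x) (𝓝 (g x)) :=
    (hg.continuousAt.continuousWithinAt)
  have hten2 : Filter.Tendsto (fun z => (z - x) ^ (M - n) * H z) (𝓝[≠] x) (𝓝 0) := by
    have : ContinuousAt (fun z => (z - x) ^ (M - n) * H z) x :=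
      (((continuous_id.sub continuous_const).pow _).continuousAt).mul hH.continuousAt
    have h0 : (x - x) ^ (M - n) * H x = 0 := by
      rw [sub_self, zero_pow (by omega : M - n ≠ 0), zero_mul]
    have := (this.continuousWithinAt (s := {x}ᶜ))
    rw [ContinuousWithinAt] at this
    rwa [h0] at this
  have : g x = 0 := tendsto_nhds_unique (hten.congr' hev) hten2
  exact hgx this

lemma meromorphicAt_order_congr {f g : ℂ → ℂ} {x : ℂ} (hf : MeromorphicAt f x)
    (hg : MeromorphicAt g x) (h : f =ᶠ[𝓝[≠] x] g) : meromorphicOrderAt f x = meromorphicOrderAt g x := by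
  rcases eq_or_ne (meromorphicOrderAt f x) ⊤ with h' | h'
  · rw [h', eq_comm, meromorphicOrderAt_eq_top_iff]
    filter_upwards [h, meromorphicOrderAt_eq_top_iff.mp h'] with z e1 e2
    rw [← e1, e2]
  · obtain ⟨n, hn⟩ := WithTop.ne_top_iff_exists.mp h'
    obtain ⟨g₀, h1, h2, h3⟩ := (meromorphicOrderAt_eq_int_iff hf).mp hn.symm
    rw [← hn, eq_comm, meromorphicOrderAt_eq_int_iff hg]
    exact ⟨g₀, h1, h2, by filter_upwards [h, h3] with z e1 e2; rw [← e1, e2]⟩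

lemma morder_ge_of_eventuallyEq {β H : ℂ → ℂ} {x : ℂ} (hH : AnalyticAt ℂ H x) (M : ℕ)
    (h : ∀ᶠ z in 𝓝[≠] x, β z = (z - x) ^ M * H z) :
    (((M : ℤ) : ℤ) : WithTop ℤ) ≤ morder β x := by
  have hPa : AnalyticAt ℂ (fun z => (z - x) ^ M * H z) x :=
    ((analyticAt_id.sub analyticAt_const).pow M).mul hH
  have hPm := hPa.meromorphicAt
  have hβ : MeromorphicAt β x := hPm.congr (EventuallyEq.symm h)
  unfold morder
  rw [dif_pos hβ]
  have e1 : meromorphicOrderAt β x = meromorphicOrderAt (fun z => (z - x) ^ M * H z) x := meromorphicAt_order_congr hβ hPm h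
  rw [e1, hPa.meromorphicOrderAt_eq]
  have e2 : (M : ℕ∞) ≤ analyticOrderAt (fun z => (z - x) ^ M * H z) x :=
    analyticAt_order_ge hPa hH M (Filter.Eventually.of_forall fun z => rfl)
  rcases eq_or_ne (analyticOrderAt (fun z => (z - x) ^ M * H z) x) ⊤ with h' | h'
  · rw [h']; exact le_top
  · obtain ⟨n, hn⟩ := WithTop.ne_top_iff_exists.mp h'
    rw [← hn] at e2 ⊢
    have e3 : M ≤ n := Nat.cast_le.mp e2
    change ((M : ℤ) : WithTop ℤ) ≤ ((n : ℤ) : WithTop ℤ)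
    exact_mod_cast e3

lemma deriv_pow_mul' {h : ℂ → ℂ} {z₀ z : ℂ} (hd : DifferentiableAt ℂ h z) (m : ℕ) (hm : 1 ≤ m) :
    deriv (fun w => (w - z₀) ^ m * h w) z
      = (z - z₀) ^ (m - 1) * ((m : ℂ) * h z + (z - z₀) * deriv h z) := by
  have h1 : HasDerivAt (fun w : ℂ => (w - z₀) ^ m)
      ((m : ℂ) * (z - z₀) ^ (m - 1) * 1) z := ((hasDerivAt_id z).sub_const z₀).pow m
  have h2 : HasDerivAt h (deriv h z) z := hd.hasDerivAt
  rw [show (fun w => (w - z₀) ^ m * h w) = (fun w => (w - z₀) ^ m) * h from rfl, (h1.mul h2).deriv]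
  have : (z - z₀) ^ m = (z - z₀) ^ (m - 1) * (z - z₀) := by
    conv_lhs => rw [show m = (m - 1) + 1 by omega, pow_succ]
  rw [this]; ring

lemma algebra_helper {a A B c : ℂ} (ha : a ≠ 0) (e1 e2 : ℕ) :
    -((a ^ (e1 + e2) * A) / B) / (a ^ e2 * c) = a ^ e1 * ((-A / B) * c⁻¹) := by
  have h2 : (a : ℂ) ^ e2 ≠ 0 := pow_ne_zero _ ha
  rw [div_eq_mul_inv _ (a ^ e2 * c), mul_inv, pow_add]
  calc -(a ^ e1 * a ^ e2 * A / B) * ((a ^ e2)⁻¹ * c⁻¹)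
      = (a ^ e2 * (a ^ e2)⁻¹) * (a ^ e1 * ((-A / B) * c⁻¹)) := by ring
    _ = a ^ e1 * ((-A / B) * c⁻¹) := by rw [mul_inv_cancel₀ h2, one_mul]

lemma iter_factor {h₀ : ℂ → ℂ} {z₀ : ℂ} {V : Set ℂ} (hV : IsOpen V)
    (han : ∀ z ∈ V, AnalyticAt ℂ h₀ z) (q : ℕ) :
    ∀ k : ℕ, k ≤ q → ∃ hk : ℂ → ℂ, (∀ z ∈ V, AnalyticAt ℂ hk z) ∧
      ∀ z ∈ V, iteratedDeriv k (fun z => (z - z₀) ^ q * h₀ z) z = (z - z₀) ^ (q - k) * hk z := by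
  intro k
  induction k with
  | zero =>
    intro _
    exact ⟨h₀, han, fun z _ => by rw [iteratedDeriv_zero, Nat.sub_zero]⟩
  | succ j ih =>
    intro hjq
    obtain ⟨hj, hjan, hjeq⟩ := ih (by omega)
    refine ⟨fun z => ((q - j : ℕ) : ℂ) * hj z + (z - z₀) * deriv hj z, ?_, ?_⟩
    · intro z hz
      have hder : AnalyticAt ℂ (deriv hj) z :=
        (AnalyticOnNhd.deriv (fun y hy => hjan y hy)) z hz
      exact ((analyticAt_const.mul (hjan z hz)).add
        ((analyticAt_id.sub analyticAt_const).mul hder))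
    · intro z hz
      rw [iteratedDeriv_succ]
      have heq : iteratedDeriv j (fun z => (z - z₀) ^ q * h₀ z)
          =ᶠ[𝓝 z] fun w => (w - z₀) ^ (q - j) * hj w := by
        filter_upwards [hV.mem_nhds hz] with w hw using hjeq w hw
      rw [heq.deriv_eq]
      rw [deriv_pow_mul' ((hjan z hz).differentiableAt) (q - j) (by omega)]
      rw [show q - j - 1 = q - (j + 1) by omega]

lemma main_aux {f g β : ℂ → ℂ} {z₀ : ℂ} {q₀ qk k q : ℕ} (hq₀ : 2 ≤ q₀)
    (hk : 1 ≤ k) (hq : k + 1 ≤ q)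
    (hg : ∀ z, g z = f z ^ q₀ * (iteratedDeriv k f z) ^ qk - 1)
    (hβ : ∀ z, β z = -(deriv g z / g z) / f z ^ (q₀ - 1))
    {h₀ : ℂ → ℂ} (h₀a : AnalyticAt ℂ h₀ z₀) (h₀x : h₀ z₀ ≠ 0)
    (h₀eq : ∀ᶠ z in 𝓝[≠] z₀, f z = (z - z₀) ^ q * h₀ z) :
    ∃ H : ℂ → ℂ, AnalyticAt ℂ H z₀ ∧
      ∀ᶠ z in 𝓝[≠] z₀, β z = (z - z₀) ^ ((q - k) * qk + (q - 1)) * H z := by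
  classical
  -- find an open neighbourhood V
  have h₀eq' : ∀ᶠ z in 𝓝 z₀, (z ≠ z₀ → f z = (z - z₀) ^ q * h₀ z) ∧ AnalyticAt ℂ h₀ z := by
    rw [eventually_nhdsWithin_iff] at h₀eq
    filter_upwards [h₀eq, h₀a.eventually_analyticAt] with z hz han
    exact ⟨fun hne => hz (by simpa using hne), han⟩
  obtain ⟨V, hVsub, hVopen, hz₀V⟩ := eventually_nhds_iff.mp h₀eq'
  have han : ∀ z ∈ V, AnalyticAt ℂ h₀ z := fun z hz => (hVsub z hz).2
  have hfF : ∀ z ∈ V, z ≠ z₀ → f z = (z - z₀) ^ q * h₀ z := fun z hz => (hVsub z hz).1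
  obtain ⟨hkf, hkan, hkeq⟩ := iter_factor hVopen han q k (by omega)
  set F : ℂ → ℂ := fun z => (z - z₀) ^ q * h₀ z with hF
  set P : ℂ → ℂ := fun z => F z ^ q₀ * (iteratedDeriv k F z) ^ qk with hP
  set N : ℕ := q * q₀ + (q - k) * qk with hN
  set HP : ℂ → ℂ := fun z => h₀ z ^ q₀ * hkf z ^ qk with hHP
  have hN1 : 1 ≤ N := by
    have : 0 < q * q₀ := Nat.mul_pos (by omega) (by omega)
    omega
  have hHPan : ∀ z ∈ V, AnalyticAt ℂ HP z := fun z hz =>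
    ((han z hz).pow q₀).mul ((hkan z hz).pow qk)
  have hPfac : ∀ z ∈ V, P z = (z - z₀) ^ N * HP z := by
    intro z hz
    simp only [hP, hF, hHP, hN]
    rw [hkeq z hz]
    rw [mul_pow, mul_pow, ← pow_mul, ← pow_mul, pow_add]
    ring
  set H₁ : ℂ → ℂ := fun z => (N : ℂ) * HP z + (z - z₀) * deriv HP z with hH₁
  have hderivP : ∀ z ∈ V, deriv P z = (z - z₀) ^ (N - 1) * H₁ z := by
    intro z hz
    have heq : P =ᶠ[𝓝 z] fun w => (w - z₀) ^ N * HP w := by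
      filter_upwards [hVopen.mem_nhds hz] with w hw using hPfac w hw
    rw [heq.deriv_eq, deriv_pow_mul' ((hHPan z hz).differentiableAt) N hN1, hH₁]
  -- g equals P - 1 away from z₀
  have hiter : Set.EqOn (iteratedDeriv k f) (iteratedDeriv k F) (V \ {z₀}) := by
    apply Set.EqOn.iteratedDeriv_of_isOpen
    · intro z hz
      exact hfF z hz.1 hz.2
    · exact hVopen.sdiff isClosed_singleton
  have hgG : ∀ z ∈ V \ {z₀}, g z = P z - 1 := by
    intro z hz
    rw [hg z, hiter hz, hfF z hz.1 hz.2, hP]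
  have hderivg : ∀ z ∈ V \ {z₀}, deriv g z = deriv P z := by
    intro z hz
    have heq : g =ᶠ[𝓝 z] fun w => P w - 1 := by
      filter_upwards [(hVopen.sdiff isClosed_singleton).mem_nhds hz] with w hw using hgG w hw
    rw [heq.deriv_eq, deriv_sub_const]
  -- value of P - 1 at z₀
  have hGz₀ : P z₀ - 1 = -1 := by
    have hFz₀ : F z₀ = 0 := by
      simp only [hF]
      rw [sub_self, zero_pow (by omega : q ≠ 0), zero_mul]
    simp only [hP, hFz₀]
    rw [zero_pow (by omega : q₀ ≠ 0), zero_mul, zero_sub]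
  -- analyticity at z₀
  have hFan : AnalyticAt ℂ F z₀ :=
    ((analyticAt_id.sub analyticAt_const).pow q).mul h₀a
  have hitFan : AnalyticAt ℂ (iteratedDeriv k F) z₀ := by
    refine AnalyticAt.congr
      (f := fun w => (w - z₀) ^ (q - k) * hkf w)
      (((analyticAt_id.sub analyticAt_const).pow (q - k)).mul (hkan z₀ hz₀V)) ?_
    filter_upwards [hVopen.mem_nhds hz₀V] with w hw using (hkeq w hw).symm
  have hPan : AnalyticAt ℂ P z₀ := (hFan.pow q₀).mul (hitFan.pow qk)
  have hGan : AnalyticAt ℂ (fun z => P z - 1) z₀ := hPan.sub analyticAt_const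
  have hH₁an : AnalyticAt ℂ H₁ z₀ := by
    have hHPz : AnalyticAt ℂ HP z₀ := hHPan z₀ hz₀V
    have hder : AnalyticAt ℂ (deriv HP) z₀ :=
      (AnalyticOnNhd.deriv (fun y hy => hHPan y hy)) z₀ hz₀V
    exact (analyticAt_const.mul hHPz).add ((analyticAt_id.sub analyticAt_const).mul hder)
  refine ⟨fun z => (-(H₁ z) / (P z - 1)) * ((h₀ z) ^ (q₀ - 1))⁻¹, ?_, ?_⟩
  · refine AnalyticAt.mul ?_ ?_
    · exact (hH₁an.neg.div hGan (by rw [hGz₀]; norm_num))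
    · exact (h₀a.pow (q₀ - 1)).inv (pow_ne_zero _ h₀x)
  · have hexp : N - 1 = ((q - k) * qk + (q - 1)) + q * (q₀ - 1) := by
      have h1 : q * q₀ = q * (q₀ - 1) + q := by
        conv_lhs => rw [show q₀ = (q₀ - 1) + 1 by omega]
        ring
      omega
    have hVmem : ∀ᶠ z in 𝓝[≠] z₀, z ∈ V :=
      eventually_nhdsWithin_of_eventually_nhds (hVopen.mem_nhds hz₀V)
    filter_upwards [hVmem, self_mem_nhdsWithin] with z hzV hzne
    have hzne' : z ≠ z₀ := hzne
    have ha : z - z₀ ≠ 0 := sub_ne_zero.mpr hzne'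
    rw [hβ z, hderivg z ⟨hzV, hzne'⟩, hgG z ⟨hzV, hzne'⟩, hfF z hzV hzne',
      hderivP z hzV, hexp, mul_pow, ← pow_mul]
    exact algebra_helper ha ((q - k) * qk + (q - 1)) (q * (q₀ - 1))

theorem stmt16 (f : ℂ → ℂ) (hf : MeromorphicOn f Set.univ)
    (q₀ qk k : ℕ) (hq₀ : 2 ≤ q₀) (hqk : 1 ≤ qk) (hk : 1 ≤ k)
    (g β : ℂ → ℂ)
    (hg : ∀ z, g z = (f z) ^ q₀ * (iteratedDeriv k f z) ^ qk - 1)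
    (hβ : ∀ z, β z = -(deriv g z / g z) / (f z) ^ (q₀ - 1))
    (z₀ : ℂ) (q : ℕ) (hq : k + 1 ≤ q) (hzero : morder f z₀ = ((q : ℤ) : ℤ)) :
    (((qk : ℤ) * ((q : ℤ) - (k : ℤ)) + ((q : ℤ) - 1) : ℤ) : WithTop ℤ) ≤ morder β z₀ := by
  classical
  have hfm : MeromorphicAt f z₀ := hf z₀ (Set.mem_univ z₀)
  have hzero' : meromorphicOrderAt f z₀ = ((q : ℤ) : WithTop ℤ) := by
    unfold morder at hzero
    rwa [dif_pos hfm] at hzero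
  obtain ⟨h₀, h₀a, h₀x, h₀eq⟩ := (meromorphicOrderAt_eq_int_iff hfm).mp hzero'
  have h₀eq' : ∀ᶠ z in nhdsWithin z₀ {z₀}ᶜ, f z = (z - z₀) ^ q * h₀ z := by
    filter_upwards [h₀eq] with z hz
    rw [hz, zpow_natCast, smul_eq_mul]
  obtain ⟨H, hHan, hHeq⟩ := main_aux hq₀ hk hq hg hβ h₀a h₀x h₀eq'
  have key := morder_ge_of_eventuallyEq hHan ((q - k) * qk + (q - 1)) hHeq
  have hcast : ((qk : ℤ) * ((q : ℤ) - (k : ℤ)) + ((q : ℤ) - 1) : ℤ)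
      = (((q - k) * qk + (q - 1) : ℕ) : ℤ) := by
    push_cast [Nat.cast_sub (show k ≤ q by omega), Nat.cast_sub (show 1 ≤ q by omega)]
    ring
  rw [show ((((qk : ℤ) * ((q : ℤ) - (k : ℤ)) + ((q : ℤ) - 1) : ℤ)) : WithTop ℤ)
      = (((((q - k) * qk + (q - 1) : ℕ) : ℤ) : ℤ) : WithTop ℤ) from congrArg _ hcast]
  exact key
end
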